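/- Let A be a graded-commutative superalgebra over a field of characteristic not 2, let R = A_0^ev ⊕ A_1^odd, and let I be a homogeneous ideal of R containing the nilradical of R. Then I^+ := I ⊕ A_0^odd ⊕ A_1^ev is a homogeneous (two-sided) ideal of A. -/

import Mathlib

/-- A graded-commutative graded superalgebra over `k`: a `ℤ × ZMod 2`-graded
`k`-algebra satisfying the sign rule `ab = (-1)^(|a|·|b| + deg a · deg b) ba`
for homogeneous elements. -/
structure GradedSuperalgebra (k A : Type) [Field k] [Ring A] [Algebra k A] where
  grading : ℤ × ZMod 2 → Submodule k A
  one_mem : (1 : A) ∈ grading (0, 0)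
  mul_mem : ∀ {i j : ℤ × ZMod 2} {a b : A},
    a ∈ grading i → b ∈ grading j → a * b ∈ grading (i + j)
  internal : DirectSum.IsInternal grading
  comm : ∀ {m n : ℤ} {s t : ZMod 2} {a b : A}, a ∈ grading (m, s) → b ∈ grading (n, t) →
    a * b = ((-1 : k) ^ ((s * t).val + (m * n).natAbs)) • (b * a)

namespace GradedSuperalgebra

variable {k A : Type} [Field k] [Ring A] [Algebra k A] (GS : GradedSuperalgebra k A)

/-- The sum of the graded pieces whose index satisfies a predicate. -/
def piece (P : ℤ × ZMod 2 → Prop) : Submodule k A :=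
  ⨆ p : {p : ℤ × ZMod 2 // P p}, GS.grading p

/-- `R = A₀ᵉᵛ ⊕ A₁ᵒᵈᵈ`: even ℤ-degree with parity `0` together with odd ℤ-degree
with parity `1`; an ordinary-commutative subalgebra of `A`. -/
def Rsub : Submodule k A :=
  GS.piece fun p => (Even p.1 ∧ p.2 = 0) ∨ (Odd p.1 ∧ p.2 = 1)

/-- `A₀ᵉᵛ`: even ℤ-degree, parity `0`. -/
def A0ev : Submodule k A := GS.piece fun p => Even p.1 ∧ p.2 = 0

/-- `A₁ᵒᵈᵈ`: odd ℤ-degree, parity `1`. -/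
def A1odd : Submodule k A := GS.piece fun p => Odd p.1 ∧ p.2 = 1

/-- `A₀ᵒᵈᵈ`: odd ℤ-degree, parity `0`. -/
def A0odd : Submodule k A := GS.piece fun p => Odd p.1 ∧ p.2 = 0

/-- `A₁ᵉᵛ`: even ℤ-degree, parity `1`. -/
def A1ev : Submodule k A := GS.piece fun p => Even p.1 ∧ p.2 = 1

/-- A submodule of `A` is homogeneous if it is spanned by its homogeneous elements. -/
def IsHomogeneous (I : Submodule k A) : Prop :=
  I = Submodule.span k {x : A | x ∈ I ∧ ∃ p, x ∈ GS.grading p}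

end GradedSuperalgebra

/-!
STATEMENT 1. If `I` is a homogeneous ideal of `R = A₀ᵉᵛ ⊕ A₁ᵒᵈᵈ` containing the
nilradical of `R`, then `I⁺ = I ⊕ A₀ᵒᵈᵈ ⊕ A₁ᵉᵛ` is a homogeneous two-sided ideal of `A`.
-/
-- auxiliary lemmas

def PRp (p : ℤ × ZMod 2) : Prop := (Even p.1 ∧ p.2 = 0) ∨ (Odd p.1 ∧ p.2 = 1)
def PNp (p : ℤ × ZMod 2) : Prop := (Odd p.1 ∧ p.2 = 0) ∨ (Even p.1 ∧ p.2 = 1)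

lemma zmod2_cases (s : ZMod 2) : s = 0 ∨ s = 1 := by revert s; decide

lemma PR_or_PN (p : ℤ × ZMod 2) : PRp p ∨ PNp p := by
  rcases Int.even_or_odd p.1 with h | h <;> rcases zmod2_cases p.2 with h2 | h2
  · exact Or.inl (Or.inl ⟨h, h2⟩)
  · exact Or.inr (Or.inr ⟨h, h2⟩)
  · exact Or.inr (Or.inl ⟨h, h2⟩)
  · exact Or.inl (Or.inr ⟨h, h2⟩)

lemma PR_add_PR {p q : ℤ × ZMod 2} (hp : PRp p) (hq : PRp q) : PRp (p + q) := by
  have e1 : (p + q).1 = p.1 + q.1 := rfl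
  have e2 : (p + q).2 = p.2 + q.2 := rfl
  rcases hp with ⟨h1, h2⟩ | ⟨h1, h2⟩ <;> rcases hq with ⟨g1, g2⟩ | ⟨g1, g2⟩
  · exact Or.inl ⟨by rw [e1]; exact h1.add g1, by rw [e2, h2, g2]; rfl⟩
  · exact Or.inr ⟨by rw [e1]; exact h1.add_odd g1, by rw [e2, h2, g2]; rfl⟩
  · exact Or.inr ⟨by rw [e1]; exact h1.add_even g1, by rw [e2, h2, g2]; rfl⟩
  · exact Or.inl ⟨by rw [e1]; exact h1.add_odd g1, by rw [e2, h2, g2]; rfl⟩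

lemma PR_add_PN {p q : ℤ × ZMod 2} (hp : PRp p) (hq : PNp q) : PNp (p + q) := by
  have e1 : (p + q).1 = p.1 + q.1 := rfl
  have e2 : (p + q).2 = p.2 + q.2 := rfl
  rcases hp with ⟨h1, h2⟩ | ⟨h1, h2⟩ <;> rcases hq with ⟨g1, g2⟩ | ⟨g1, g2⟩
  · exact Or.inl ⟨by rw [e1]; exact h1.add_odd g1, by rw [e2, h2, g2]; rfl⟩
  · exact Or.inr ⟨by rw [e1]; exact h1.add g1, by rw [e2, h2, g2]; rfl⟩
  · exact Or.inr ⟨by rw [e1]; exact h1.add_odd g1, by rw [e2, h2, g2]; rfl⟩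
  · exact Or.inl ⟨by rw [e1]; exact h1.add_even g1, by rw [e2, h2, g2]; rfl⟩

lemma PN_add_PR {p q : ℤ × ZMod 2} (hp : PNp p) (hq : PRp q) : PNp (p + q) := by
  have : p + q = q + p := add_comm p q
  rw [this]; exact PR_add_PN hq hp

lemma PN_add_PN {p q : ℤ × ZMod 2} (hp : PNp p) (hq : PNp q) : PRp (p + q) := by
  have e1 : (p + q).1 = p.1 + q.1 := rfl
  have e2 : (p + q).2 = p.2 + q.2 := rfl
  rcases hp with ⟨h1, h2⟩ | ⟨h1, h2⟩ <;> rcases hq with ⟨g1, g2⟩ | ⟨g1, g2⟩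
  · exact Or.inl ⟨by rw [e1]; exact h1.add_odd g1, by rw [e2, h2, g2]; rfl⟩
  · exact Or.inr ⟨by rw [e1]; exact h1.add_even g1, by rw [e2, h2, g2]; rfl⟩
  · exact Or.inr ⟨by rw [e1]; exact h1.add_odd g1, by rw [e2, h2, g2]; rfl⟩
  · exact Or.inl ⟨by rw [e1]; exact h1.add g1, by rw [e2, h2, g2]; rfl⟩

/-- homogeneous elements of N-class indices square to zero -/
lemma sq_zero {k A : Type} [Field k] [Ring A] [Algebra k A]
    (h2 : (2 : k) ≠ 0) (GS : GradedSuperalgebra k A)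
    {p : ℤ × ZMod 2} (hp : PNp p) {a : A} (ha : a ∈ GS.grading p) : a * a = 0 := by
  have ha' : a ∈ GS.grading (p.1, p.2) := ha
  have h := GS.comm ha' ha'
  have hodd : Odd ((p.2 * p.2).val + (p.1 * p.1).natAbs) := by
    rcases hp with ⟨h1, hs⟩ | ⟨h1, hs⟩
    · rw [hs]
      have : ((0 * 0 : ZMod 2)).val = 0 := rfl
      rw [this, Nat.zero_add]
      exact Int.natAbs_odd.mpr (h1.mul h1)
    · rw [hs]
      have : ((1 * 1 : ZMod 2)).val = 1 := rfl
      rw [this]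
      exact (Int.natAbs_even.mpr (h1.mul_right _)).one_add
  rw [hodd.neg_one_pow, neg_one_smul] at h
  have hadd : a * a + a * a = 0 := by
    nth_rewrite 1 [h]; exact neg_add_cancel _
  have h3 : (2 : k) • (a * a) = 0 := by rw [two_smul]; exact hadd
  calc a * a = ((2 : k)⁻¹ * 2) • (a * a) := by rw [inv_mul_cancel₀ h2, one_smul]
    _ = (2 : k)⁻¹ • ((2 : k) • (a * a)) := by rw [mul_smul]
    _ = 0 := by rw [h3, smul_zero]

/-- if a² = 0 then (ab)² = 0 using the sign rule -/
lemma prod_sq_zero {k A : Type} [Field k] [Ring A] [Algebra k A]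
    (GS : GradedSuperalgebra k A)
    {p q : ℤ × ZMod 2} {a b : A} (ha : a ∈ GS.grading p) (hb : b ∈ GS.grading q)
    (haa : a * a = 0) : (a * b) * (a * b) = 0 := by
  have ha' : a ∈ GS.grading (p.1, p.2) := ha
  have hb' : b ∈ GS.grading (q.1, q.2) := hb
  have h := GS.comm hb' ha'
  calc (a * b) * (a * b) = a * (b * a) * b := by
        rw [mul_assoc a b (a * b), ← mul_assoc b a b, ← mul_assoc]
    _ = 0 := by
        rw [h, mul_smul_comm, smul_mul_assoc, ← mul_assoc, haa,
          zero_mul, zero_mul, smul_zero]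


theorem statement1 {k A : Type} [Field k] [Ring A] [Algebra k A]
    (h2 : (2 : k) ≠ 0) (GS : GradedSuperalgebra k A)
    (I : Submodule k A)
    (hIR : I ≤ GS.Rsub)
    (hIdeal : ∀ r ∈ GS.Rsub, ∀ x ∈ I, r * x ∈ I ∧ x * r ∈ I)
    (hIhom : GS.IsHomogeneous I)
    (hInil : ∀ x ∈ GS.Rsub, (∃ n : ℕ, x ^ n = 0) → x ∈ I) :
    (∀ a : A, ∀ x ∈ I ⊔ GS.A0odd ⊔ GS.A1ev, a * x ∈ I ⊔ GS.A0odd ⊔ GS.A1ev ∧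
      x * a ∈ I ⊔ GS.A0odd ⊔ GS.A1ev) ∧
    GS.IsHomogeneous (I ⊔ GS.A0odd ⊔ GS.A1ev) := by
  set J := I ⊔ GS.A0odd ⊔ GS.A1ev with hJ
  -- basic inclusions
  have hIJ : I ≤ J := le_trans le_sup_left le_sup_left
  have h0J : GS.A0odd ≤ J := le_trans le_sup_right le_sup_left
  have h1J : GS.A1ev ≤ J := le_sup_right
  have hgR : ∀ {q : ℤ × ZMod 2}, PRp q → GS.grading q ≤ GS.Rsub := by
    intro q hq
    exact le_iSup (fun p : {p : ℤ × ZMod 2 // PRp p} => GS.grading p) ⟨q, hq⟩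
  have hg0 : ∀ {q : ℤ × ZMod 2}, (Odd q.1 ∧ q.2 = 0) → GS.grading q ≤ GS.A0odd := by
    intro q hq
    exact le_iSup (fun p : {p : ℤ × ZMod 2 // Odd p.1 ∧ p.2 = 0} => GS.grading p) ⟨q, hq⟩
  have hg1 : ∀ {q : ℤ × ZMod 2}, (Even q.1 ∧ q.2 = 1) → GS.grading q ≤ GS.A1ev := by
    intro q hq
    exact le_iSup (fun p : {p : ℤ × ZMod 2 // Even p.1 ∧ p.2 = 1} => GS.grading p) ⟨q, hq⟩
  have hgN : ∀ {q : ℤ × ZMod 2}, PNp q → GS.grading q ≤ J := by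
    intro q hq
    rcases hq with h | h
    · exact le_trans (hg0 h) h0J
    · exact le_trans (hg1 h) h1J
  -- core: homogeneous a times x ∈ I
  have keyRmem : ∀ (p : ℤ × ZMod 2) (a : A), a ∈ GS.grading p → ∀ x ∈ I,
      a * x ∈ J ∧ x * a ∈ J := by
    intro p a ha x hx
    rcases PR_or_PN p with hp | hp
    · have har : a ∈ GS.Rsub := hgR hp ha
      obtain ⟨h1, h4⟩ := hIdeal a har x hx
      exact ⟨hIJ h1, hIJ h4⟩
    · -- a of N-class, x ∈ Rsub: products land in N-pieces
      have hxR : x ∈ GS.Rsub := hIR hx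
      refine Submodule.iSup_induction (motive := fun x => a * x ∈ J ∧ x * a ∈ J) _ hxR ?_ ?_ ?_
      · rintro ⟨q, hq⟩ b hb
        exact ⟨hgN (PN_add_PR hp hq) (GS.mul_mem ha hb),
               hgN (PR_add_PN hq hp) (GS.mul_mem hb ha)⟩
      · simp
      · intro y z hy hz
        rw [mul_add, add_mul]
        exact ⟨Submodule.add_mem _ hy.1 hz.1, Submodule.add_mem _ hy.2 hz.2⟩
  -- core: homogeneous a times homogeneous b of N-class
  have keyNb : ∀ (p q : ℤ × ZMod 2) (a b : A), a ∈ GS.grading p → b ∈ GS.grading q →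
      PNp q → a * b ∈ J ∧ b * a ∈ J := by
    intro p q a b ha hb hq
    rcases PR_or_PN p with hp | hp
    · exact ⟨hgN (PR_add_PN hp hq) (GS.mul_mem ha hb),
             hgN (PN_add_PR hq hp) (GS.mul_mem hb ha)⟩
    · have haa : a * a = 0 := sq_zero h2 GS hp ha
      have hbb : b * b = 0 := sq_zero h2 GS hq hb
      constructor
      · refine hIJ (hInil _ (hgR (PN_add_PN hp hq) (GS.mul_mem ha hb)) ⟨2, ?_⟩)
        rw [pow_two]; exact prod_sq_zero GS ha hb haa
      · refine hIJ (hInil _ (hgR (PN_add_PN hq hp) (GS.mul_mem hb ha)) ⟨2, ?_⟩)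
        rw [pow_two]; exact prod_sq_zero GS hb ha hbb
  -- homogeneous a times general x ∈ J
  have key : ∀ (p : ℤ × ZMod 2) (a : A), a ∈ GS.grading p → ∀ x ∈ J,
      a * x ∈ J ∧ x * a ∈ J := by
    intro p a ha x hx
    obtain ⟨y, hy, z, hz, rfl⟩ := Submodule.mem_sup.mp hx
    obtain ⟨u, hu, v, hv, rfl⟩ := Submodule.mem_sup.mp hy
    have hC : ∀ w ∈ GS.A0odd ⊔ GS.A1ev, a * w ∈ J ∧ w * a ∈ J := by
      intro w hw
      obtain ⟨b1, hb1, b2, hb2, rfl⟩ := Submodule.mem_sup.mp hw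
      have H1 : a * b1 ∈ J ∧ b1 * a ∈ J := by
        refine Submodule.iSup_induction (motive := fun x => a * x ∈ J ∧ x * a ∈ J) _ hb1 ?_ ?_ ?_
        · rintro ⟨q, hq⟩ b hb
          exact keyNb p q a b ha hb (Or.inl hq)
        · simp
        · intro y z hy hz
          rw [mul_add, add_mul]
          exact ⟨Submodule.add_mem _ hy.1 hz.1, Submodule.add_mem _ hy.2 hz.2⟩
      have H2 : a * b2 ∈ J ∧ b2 * a ∈ J := by
        refine Submodule.iSup_induction (motive := fun x => a * x ∈ J ∧ x * a ∈ J) _ hb2 ?_ ?_ ?_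
        · rintro ⟨q, hq⟩ b hb
          exact keyNb p q a b ha hb (Or.inr hq)
        · simp
        · intro y z hy hz
          rw [mul_add, add_mul]
          exact ⟨Submodule.add_mem _ hy.1 hz.1, Submodule.add_mem _ hy.2 hz.2⟩
      rw [mul_add, add_mul]
      exact ⟨Submodule.add_mem _ H1.1 H2.1, Submodule.add_mem _ H1.2 H2.2⟩
    have HU : a * u ∈ J ∧ u * a ∈ J := keyRmem p a ha u hu
    have HV : a * v ∈ J ∧ v * a ∈ J := hC v (((le_sup_left :
        GS.A0odd ≤ GS.A0odd ⊔ GS.A1ev)) hv)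
    have HZ : a * z ∈ J ∧ z * a ∈ J := hC z ((le_sup_right :
        GS.A1ev ≤ GS.A0odd ⊔ GS.A1ev) hz)
    rw [mul_add, mul_add, add_mul, add_mul]
    exact ⟨Submodule.add_mem _ (Submodule.add_mem _ HU.1 HV.1) HZ.1,
           Submodule.add_mem _ (Submodule.add_mem _ HU.2 HV.2) HZ.2⟩
  constructor
  · -- general a via decomposition of A
    intro a x hx
    have htop : a ∈ ⨆ p, GS.grading p := by
      rw [GS.internal.submodule_iSup_eq_top]; trivial
    refine Submodule.iSup_induction (motive := fun a => a * x ∈ J ∧ x * a ∈ J) _ htop ?_ ?_ ?_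
    · intro p b hb
      exact key p b hb x hx
    · simp
    · intro y z hy hz
      rw [add_mul, mul_add]
      exact ⟨Submodule.add_mem _ hy.1 hz.1, Submodule.add_mem _ hy.2 hz.2⟩
  · -- homogeneity
    rw [GradedSuperalgebra.IsHomogeneous]
    apply le_antisymm
    · -- J ≤ span of its homogeneous elements
      have hspan := Submodule.subset_span (R := k)
        (s := {x : A | x ∈ J ∧ ∃ p, x ∈ GS.grading p})
      refine sup_le (sup_le ?_ ?_) ?_
      · rw [hIhom]
        apply Submodule.span_mono
        rintro x ⟨hxI, hp⟩
        exact ⟨hIJ hxI, hp⟩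
      · refine iSup_le ?_
        rintro ⟨q, hq⟩
        intro x hx
        exact hspan ⟨h0J (hg0 hq hx), ⟨q, hx⟩⟩
      · refine iSup_le ?_
        rintro ⟨q, hq⟩
        intro x hx
        exact hspan ⟨h1J (hg1 hq hx), ⟨q, hx⟩⟩
    · rw [Submodule.span_le]
      rintro x ⟨hxJ, -⟩
      exact hxJ
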